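/- Let μ be a topological measure on a locally compact, Hausdorff, connected space X. (A) If μ(X) < ∞ and f ∈ C₀(X), then there exists a finite Borel measure m_f on ℝ such that m_f(W) = μ(f⁻¹(W)) for every open set W ⊆ ℝ. (B) If μ is compact-finite and f ∈ C_c(X), then there exists a compact-finite Borel measure m_f on ℝ such that m_f(W) = μ(f⁻¹(W \ {0})) for every open set W ⊆ ℝ; in particular m_f(W) = μ(f⁻¹(W)) for every open W ⊆ ℝ \ {0}. In either case m_f is the Lebesgue–Stieltjes measure associated with the distribution function F of f, and the support of m_f is contained in the closure of f(X). -/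

import Mathlib

open Set Filter Topology MeasureTheory
open scoped ENNReal BoundedContinuousFunction

universe u

/-- A topological measure on `X`: a set function on subsets of `X` (only its values on open
and closed sets matter), not identically `∞` on open/closed sets, satisfying (TM1)–(TM3). -/
structure TopMeasure (X : Type u) [TopologicalSpace X] where
  toFun : Set X → ℝ≥0∞
  not_all_top : ∃ A : Set X, (IsOpen A ∨ IsClosed A) ∧ toFun A ≠ ∞
  tm1 : ∀ A B : Set X, Disjoint A B → (IsOpen A ∨ IsCompact A) → (IsOpen B ∨ IsCompact B) →
      (IsOpen (A ∪ B) ∨ IsCompact (A ∪ B)) → toFun (A ∪ B) = toFun A + toFun B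
  tm2 : ∀ U : Set X, IsOpen U → toFun U = ⨆ K ∈ {K : Set X | IsCompact K ∧ K ⊆ U}, toFun K
  tm3 : ∀ F : Set X, IsClosed F → toFun F = ⨅ U ∈ {U : Set X | IsOpen U ∧ F ⊆ U}, toFun U

/-- `μ` is compact-finite. -/
def TopMeasure.CompactFinite {X : Type u} [TopologicalSpace X] (μ : TopMeasure X) : Prop :=
  ∀ K : Set X, IsCompact K → μ.toFun K ≠ ∞

/-- The set of compactly supported continuous functions, inside `C_b(X)`. -/
def CcS (X : Type u) [TopologicalSpace X] : Set (X →ᵇ ℝ) :=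
  {f | HasCompactSupport (f : X → ℝ)}

/-- The set of continuous functions vanishing at infinity, inside `C_b(X)`. -/
def C0S (X : Type u) [TopologicalSpace X] : Set (X →ᵇ ℝ) :=
  {f | Tendsto (f : X → ℝ) (cocompact X) (nhds 0)}

/-- `𝔅` is a (non-unital) subalgebra of `C_b(X)`. -/
def IsSubalgS {X : Type u} [TopologicalSpace X] (𝔅 : Set (X →ᵇ ℝ)) : Prop :=
  (∀ f g : X →ᵇ ℝ, f ∈ 𝔅 → g ∈ 𝔅 → f + g ∈ 𝔅) ∧
  (∀ f g : X →ᵇ ℝ, f ∈ 𝔅 → g ∈ 𝔅 → f * g ∈ 𝔅) ∧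
  (∀ (c : ℝ) (f : X →ᵇ ℝ), f ∈ 𝔅 → c • f ∈ 𝔅)

/-- The singly generated subalgebra `B(h)`: the smallest closed (in `𝔅`) subalgebra of `𝔅`
containing `h`. -/
def sgen {X : Type u} [TopologicalSpace X] (𝔅 : Set (X →ᵇ ℝ)) (h : X →ᵇ ℝ) :
    Set (X →ᵇ ℝ) :=
  ⋂₀ {S : Set (X →ᵇ ℝ) | S ⊆ 𝔅 ∧ h ∈ S ∧
      (∀ f g : X →ᵇ ℝ, f ∈ S → g ∈ S → f + g ∈ S) ∧
      (∀ f g : X →ᵇ ℝ, f ∈ S → g ∈ S → f * g ∈ S) ∧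
      (∀ (c : ℝ) (f : X →ᵇ ℝ), f ∈ S → c • f ∈ S) ∧
      IsClosed {x : ↥𝔅 | (x : X →ᵇ ℝ) ∈ S}}

/-- A signed quasi-linear functional on `𝔅` (QI1), (QI2). -/
structure SignedQLF {X : Type u} [TopologicalSpace X] (𝔅 : Set (X →ᵇ ℝ)) where
  toFun : (X →ᵇ ℝ) → ℝ
  smul_eq : ∀ (a : ℝ) (f : X →ᵇ ℝ), f ∈ 𝔅 → toFun (a • f) = a * toFun f
  add_eq : ∀ h ∈ 𝔅, ∀ f g : X →ᵇ ℝ, f ∈ sgen 𝔅 h → g ∈ sgen 𝔅 h →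
      toFun (f + g) = toFun f + toFun g

/-- A (positive) quasi-linear functional on `𝔅` (QI1)–(QI3). -/
structure QLF {X : Type u} [TopologicalSpace X] (𝔅 : Set (X →ᵇ ℝ)) extends SignedQLF 𝔅 where
  pos : ∀ f : X →ᵇ ℝ, f ∈ 𝔅 → 0 ≤ f → 0 ≤ toFun f

/-- `‖ρ‖ = sup {ρ(f) : f ∈ 𝔅, 0 ≤ f ≤ 1}`, as an extended real number. -/
noncomputable def qnorm {X : Type u} [TopologicalSpace X] {𝔅 : Set (X →ᵇ ℝ)} (ρ : QLF 𝔅) :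
    ℝ≥0∞ :=
  ⨆ f ∈ {f : X →ᵇ ℝ | f ∈ 𝔅 ∧ 0 ≤ f ∧ f ≤ 1}, ENNReal.ofReal (ρ.toFun f)

/-- `m` is the measure `m_f` on `ℝ` associated with a finite topological measure `μ` and
`f ∈ C₀(X)` (case (A)): `m(W) = μ(f⁻¹(W))` for every open `W ⊆ ℝ`. -/
def IsMfA {X : Type u} [TopologicalSpace X] (μ : TopMeasure X) (f : X →ᵇ ℝ)
    (m : Measure ℝ) : Prop :=
  ∀ W : Set ℝ, IsOpen W → m W = μ.toFun ((f : X → ℝ) ⁻¹' W)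

/-- `m` is the measure `m_f` on `ℝ` associated with a compact-finite topological measure `μ`
and `f ∈ C_c(X)` (case (B)): `m(W) = μ(f⁻¹(W \ {0}))` for every open `W ⊆ ℝ`. -/
def IsMfB {X : Type u} [TopologicalSpace X] (μ : TopMeasure X) (f : X →ᵇ ℝ)
    (m : Measure ℝ) : Prop :=
  ∀ W : Set ℝ, IsOpen W → m W = μ.toFun ((f : X → ℝ) ⁻¹' (W \ {0}))

/-- The support of a (Borel) measure on `ℝ`. -/
def msupp (m : Measure ℝ) : Set ℝ := {x : ℝ | ∀ U ∈ nhds x, 0 < m U}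

/-- The set function `μ_ρ` on open sets:
`μ_ρ(U) = sup {ρ(f) : f ∈ C_c(X), 0 ≤ f ≤ 1, supp f ⊆ U}`. -/
noncomputable def muO {X : Type u} [TopologicalSpace X] {𝔅 : Set (X →ᵇ ℝ)} (ρ : QLF 𝔅)
    (U : Set X) : ℝ≥0∞ :=
  ⨆ f ∈ {f : X →ᵇ ℝ | f ∈ CcS X ∧ 0 ≤ f ∧ f ≤ 1 ∧ tsupport (f : X → ℝ) ⊆ U},
    ENNReal.ofReal (ρ.toFun f)

/-- The set function `μ_ρ` on closed sets: `μ_ρ(F) = inf {μ_ρ(U) : U open, F ⊆ U}`. -/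
noncomputable def muC {X : Type u} [TopologicalSpace X] {𝔅 : Set (X →ᵇ ℝ)} (ρ : QLF 𝔅)
    (F : Set X) : ℝ≥0∞ :=
  ⨅ U ∈ {U : Set X | IsOpen U ∧ F ⊆ U}, muO ρ U

open Classical in
/-- The set function `μ_ρ`. -/
noncomputable def muR {X : Type u} [TopologicalSpace X] {𝔅 : Set (X →ᵇ ℝ)} (ρ : QLF 𝔅) :
    Set X → ℝ≥0∞ :=
  fun A => if IsOpen A then muO ρ A else muC ρ A

/-- `ρ = ρ_μ` on `C₀(X)` (case (A)): for every `f ∈ C₀(X)` and every measure `m_f`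
associated with `μ` and `f`, `ρ(f) = ∫_ℝ id dm_f`. -/
def ReprA {X : Type u} [TopologicalSpace X] {𝔅 : Set (X →ᵇ ℝ)} (μ : TopMeasure X)
    (ρ : QLF 𝔅) : Prop :=
  ∀ f ∈ C0S X, ∀ m : Measure ℝ, IsMfA μ f m → ρ.toFun f = ∫ t, t ∂m

/-- `ρ = ρ_μ` on `C_c(X)` (case (B)). -/
def ReprB {X : Type u} [TopologicalSpace X] {𝔅 : Set (X →ᵇ ℝ)} (μ : TopMeasure X)
    (ρ : QLF 𝔅) : Prop :=
  ∀ f ∈ CcS X, ∀ m : Measure ℝ, IsMfB μ f m → ρ.toFun f = ∫ t, t ∂m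

namespace TopMeasure
variable {X : Type u} [TopologicalSpace X] [T2Space X] (μ : TopMeasure X)

lemma mono_co {K U : Set X} (hK : IsCompact K) (hU : IsOpen U) (hKU : K ⊆ U) :
    μ.toFun K ≤ μ.toFun U := by
  rw [μ.tm2 U hU]
  exact le_biSup _ ⟨hK, hKU⟩

lemma mono_oo {U V : Set X} (hU : IsOpen U) (hV : IsOpen V) (hUV : U ⊆ V) :
    μ.toFun U ≤ μ.toFun V := by
  rw [μ.tm2 U hU]
  exact iSup₂_le fun K hK => μ.mono_co hK.1 hV (hK.2.trans hUV)

lemma mono_cl {C U : Set X} (hC : IsClosed C) (hU : IsOpen U) (hCU : C ⊆ U) :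
    μ.toFun C ≤ μ.toFun U := by
  rw [μ.tm3 C hC]
  exact biInf_le _ ⟨hU, hCU⟩

lemma mono_cc {K C : Set X} (hK : IsCompact K) (hC : IsClosed C) (hKC : K ⊆ C) :
    μ.toFun K ≤ μ.toFun C := by
  rw [μ.tm3 _ hK.isClosed, μ.tm3 C hC]
  exact le_iInf₂ fun U hU => biInf_le _ ⟨hU.1, hKC.trans hU.2⟩

lemma mono_oc {U C : Set X} (hU : IsOpen U) (hC : IsClosed C) (hUC : U ⊆ C) :
    μ.toFun U ≤ μ.toFun C := by
  rw [μ.tm2 U hU]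
  exact iSup₂_le fun K hK => μ.mono_cc hK.1 hC (hK.2.trans hUC)

lemma empty_eq : μ.toFun ∅ = 0 := by
  have fin : μ.toFun ∅ ≠ ∞ := by
    obtain ⟨A, hA, hfin⟩ := μ.not_all_top
    rcases hA with h | h
    · exact fun he => hfin (top_le_iff.mp (he ▸ μ.mono_oo isOpen_empty h (empty_subset A)))
    · exact fun he => hfin (top_le_iff.mp (he ▸ μ.mono_oc isOpen_empty h (empty_subset A)))
  have h := μ.tm1 ∅ ∅ (by simp) (Or.inl isOpen_empty) (Or.inl isOpen_empty)
    (by simpa using Or.inl isOpen_empty)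
  rw [union_self] at h
  have h0 : μ.toFun ∅ + 0 = μ.toFun ∅ + μ.toFun ∅ := by simpa using h
  exact ((ENNReal.add_right_inj fin).mp h0).symm

end TopMeasure

section Master
variable {X : Type u} [TopologicalSpace X] [T2Space X]

/-- The pushforward set function `W ↦ μ(f⁻¹(W \ Z))`. -/
noncomputable def nuf (μ : TopMeasure X) (f : X →ᵇ ℝ) (Z : Set ℝ) (W : Set ℝ) : ℝ≥0∞ :=
  μ.toFun ((f : X → ℝ) ⁻¹' (W \ Z))

variable (μ : TopMeasure X) (f : X →ᵇ ℝ) {Z : Set ℝ}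

lemma Zclosed (hZ : Z ⊆ {0}) : IsClosed Z := by
  rcases Set.subset_singleton_iff_eq.mp hZ with h | h
  · exact h ▸ isClosed_empty
  · exact h ▸ isClosed_singleton

lemma nuf_isOpen (hZ : Z ⊆ {0}) {W : Set ℝ} (hW : IsOpen W) :
    IsOpen ((f : X → ℝ) ⁻¹' (W \ Z)) :=
  (hW.sdiff (Zclosed hZ)).preimage f.continuous

lemma nuf_mono (hZ : Z ⊆ {0}) {W₁ W₂ : Set ℝ} (h1 : IsOpen W₁) (h2 : IsOpen W₂) (h : W₁ ⊆ W₂) :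
    nuf μ f Z W₁ ≤ nuf μ f Z W₂ :=
  μ.mono_oo (nuf_isOpen f hZ h1) (nuf_isOpen f hZ h2)
    (preimage_mono (diff_subset_diff_left h))

lemma nuf_univ_eq : nuf μ f Z univ = μ.toFun ((f : X → ℝ) ⁻¹' Zᶜ) := by
  rw [nuf]; congr 1; rw [← compl_eq_univ_diff]

lemma nuf_le_univ (hZ : Z ⊆ {0}) {W : Set ℝ} (hW : IsOpen W) :
    nuf μ f Z W ≤ nuf μ f Z univ :=
  nuf_mono μ f hZ hW isOpen_univ (subset_univ W)

lemma nuf_empty : nuf μ f Z ∅ = 0 := by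
  rw [nuf, empty_diff, preimage_empty, μ.empty_eq]

/-- Finite additivity of `nuf` over pairwise disjoint open sets. -/
lemma nuf_finset_add (hZ : Z ⊆ {0}) (T : Finset (Set ℝ)) (ho : ∀ C ∈ T, IsOpen C)
    (hd : Set.PairwiseDisjoint (↑T : Set (Set ℝ)) id) :
    nuf μ f Z (⋃ C ∈ T, C) = ∑ C ∈ T, nuf μ f Z C := by
  classical
  induction T using Finset.induction_on with
  | empty => simpa using nuf_empty μ f
  | @insert A T hA ih =>
    have hAop : IsOpen A := ho A (Finset.mem_insert_self A T)
    have hTop : ∀ C ∈ T, IsOpen C := fun C hC => ho C (Finset.mem_insert_of_mem hC)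
    have hTun : IsOpen (⋃ C ∈ T, C) := isOpen_biUnion hTop
    have hdisj : Disjoint A (⋃ C ∈ T, C) := by
      refine Set.disjoint_iUnion₂_right.mpr fun C hC => ?_
      exact hd (Finset.mem_coe.mpr (Finset.mem_insert_self A T))
        (Finset.mem_coe.mpr (Finset.mem_insert_of_mem hC))
        (fun hAC => hA (hAC ▸ hC))
    have hdisj' : Disjoint ((f : X → ℝ) ⁻¹' (A \ Z)) ((f : X → ℝ) ⁻¹' ((⋃ C ∈ T, C) \ Z)) :=
      Disjoint.preimage _ ((hdisj.mono diff_subset diff_subset))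
    have hun : ((f : X → ℝ) ⁻¹' (A \ Z)) ∪ ((f : X → ℝ) ⁻¹' ((⋃ C ∈ T, C) \ Z))
        = (f : X → ℝ) ⁻¹' ((A ∪ ⋃ C ∈ T, C) \ Z) := by
      rw [← preimage_union, ← union_diff_distrib]
    have h1 := μ.tm1 _ _ hdisj' (Or.inl (nuf_isOpen f hZ hAop))
      (Or.inl (nuf_isOpen f hZ hTun))
      (hun ▸ Or.inl (nuf_isOpen f hZ (hAop.union hTun)))
    rw [Finset.set_biUnion_insert, Finset.sum_insert hA,
      ← ih hTop (hd.subset (by simp [Finset.coe_insert, Set.subset_insert]))]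
    rw [nuf, ← hun]
    exact h1

/-- The distribution function `a ↦ μ(f⁻¹((a,∞) \ Z))`. -/
noncomputable def FDf (μ : TopMeasure X) (f : X →ᵇ ℝ) (Z : Set ℝ) (a : ℝ) : ℝ≥0∞ :=
  nuf μ f Z (Ioi a)

lemma FDf_anti (hZ : Z ⊆ {0}) : Antitone (FDf μ f Z) := fun a b hab =>
  nuf_mono μ f hZ isOpen_Ioi isOpen_Ioi (Ioi_subset_Ioi hab)

lemma FDf_le_univ (hZ : Z ⊆ {0}) (a : ℝ) : FDf μ f Z a ≤ nuf μ f Z univ :=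
  nuf_le_univ μ f hZ isOpen_Ioi

/-- Right continuity of the distribution function. -/
lemma FDf_rc (hZ : Z ⊆ {0}) (a : ℝ) : FDf μ f Z a = ⨆ t ∈ Ioi a, FDf μ f Z t := by
  refine le_antisymm ?_ (iSup₂_le fun t ht => FDf_anti μ f hZ (le_of_lt ht))
  rw [FDf, nuf, μ.tm2 _ (nuf_isOpen f hZ isOpen_Ioi)]
  refine iSup₂_le fun K hK => ?_
  rcases K.eq_empty_or_nonempty with rfl | hne
  · rw [μ.empty_eq]; exact zero_le
  · obtain ⟨s0, hs0⟩ := (hK.1.image f.continuous).exists_isLeast (hne.image _)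
    have hs0m : s0 ∈ Ioi a \ Z := (image_subset_iff.mpr hK.2) hs0.1
    have has0 : a < s0 := hs0m.1
    have hat : a < (a + s0) / 2 := by linarith
    have hts0 : (a + s0) / 2 < s0 := by linarith
    have hKsub : K ⊆ (f : X → ℝ) ⁻¹' (Ioi ((a + s0) / 2) \ Z) := by
      intro x hx
      have h1 : (f : X → ℝ) x ∈ (f : X → ℝ) '' K := mem_image_of_mem _ hx
      have h2 := (image_subset_iff.mpr hK.2) h1
      exact ⟨lt_of_lt_of_le hts0 (hs0.2 h1), h2.2⟩
    calc μ.toFun K ≤ FDf μ f Z ((a + s0) / 2) :=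
          μ.mono_co hK.1 (nuf_isOpen f hZ isOpen_Ioi) hKsub
      _ ≤ ⨆ t ∈ Ioi a, FDf μ f Z t := le_biSup _ hat

/-- Left limit function `b ↦ ⨅ t < b, F(t)`. -/
noncomputable def Lf (μ : TopMeasure X) (f : X →ᵇ ℝ) (Z : Set ℝ) (b : ℝ) : ℝ≥0∞ :=
  ⨅ t ∈ Iio b, FDf μ f Z t

lemma Lf_le {a b : ℝ} (hab : a < b) : Lf μ f Z b ≤ FDf μ f Z a :=
  biInf_le _ hab

lemma Lf_le_univ (hZ : Z ⊆ {0}) (b : ℝ) : Lf μ f Z b ≤ nuf μ f Z univ :=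
  le_trans (Lf_le μ f (sub_one_lt b)) (FDf_le_univ μ f hZ _)

lemma id1 (hZ : Z ⊆ {0}) {a b : ℝ} (hb : 0 < b) (hab : a < b) :
    (Ioo a b \ Z) ∪ Ici b = Ioi a \ Z := by
  ext x
  constructor
  · rintro (⟨⟨h1, _⟩, h2⟩ | h)
    · exact ⟨h1, h2⟩
    · exact ⟨lt_of_lt_of_le hab h, fun hx => by
        have := hZ hx; simp only [mem_singleton_iff] at this; subst this
        exact absurd (lt_of_lt_of_le hb h) (lt_irrefl 0)⟩
  · rintro ⟨h1, h2⟩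
    rcases lt_or_ge x b with h | h
    · exact Or.inl ⟨⟨h1, h⟩, h2⟩
    · exact Or.inr h

lemma id2 (hZ : Z ⊆ {0}) {b : ℝ} (hb : 0 < b) :
    (Iio b \ Z) ∪ Ici b = univ \ Z := by
  ext x
  constructor
  · rintro (⟨_, h2⟩ | h)
    · exact ⟨trivial, h2⟩
    · exact ⟨trivial, fun hx => by
        have := hZ hx; simp only [mem_singleton_iff] at this; subst this
        exact absurd (lt_of_lt_of_le hb h) (lt_irrefl 0)⟩
  · rintro ⟨-, h2⟩
    rcases lt_or_ge x b with h | h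
    · exact Or.inl ⟨h, h2⟩
    · exact Or.inr h

lemma id3 (hZ : Z ⊆ {0}) {t : ℝ} (ht : t < 0) :
    (Ioi t \ Z) ∪ Iic t = univ \ Z := by
  ext x
  constructor
  · rintro (⟨_, h2⟩ | h)
    · exact ⟨trivial, h2⟩
    · exact ⟨trivial, fun hx => by
        have := hZ hx; simp only [mem_singleton_iff] at this; subst this
        exact absurd (lt_of_le_of_lt h ht) (lt_irrefl 0)⟩
  · rintro ⟨-, h2⟩
    rcases le_or_gt x t with h | h
    · exact Or.inr h
    · exact Or.inl ⟨h, h2⟩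

lemma id4 (hZ : Z ⊆ {0}) {a b : ℝ} (ha : a < 0) (hab : a < b) :
    (Ioo a b \ Z) ∪ Iic a = Iio b \ Z := by
  ext x
  constructor
  · rintro (⟨⟨_, h1⟩, h2⟩ | h)
    · exact ⟨h1, h2⟩
    · exact ⟨lt_of_le_of_lt h hab, fun hx => by
        have := hZ hx; simp only [mem_singleton_iff] at this; subst this
        exact absurd (lt_of_le_of_lt h ha) (lt_irrefl 0)⟩
  · rintro ⟨h1, h2⟩
    rcases le_or_gt x a with h | h
    · exact Or.inr h
    · exact Or.inl ⟨⟨h, h1⟩, h2⟩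

lemma Ici_preimage_subset (hZ : Z ⊆ {0}) {b t : ℝ} (hb : 0 < b) (htb : t < b) :
    (f : X → ℝ) ⁻¹' (Ici b) ⊆ (f : X → ℝ) ⁻¹' (Ioi t \ Z) := fun x hx =>
  ⟨lt_of_lt_of_le htb hx, fun hxZ => by
    have := hZ hxZ; simp only [mem_singleton_iff] at this
    exact absurd (lt_of_lt_of_le hb hx) (by rw [this]; exact lt_irrefl 0)⟩

lemma split_pos (hZ : Z ⊆ {0})
    (hKp : ∀ t : ℝ, 0 < t → IsCompact ((f : X → ℝ) ⁻¹' Ici t))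
    {a b : ℝ} (hb : 0 < b) (hab : a < b) :
    FDf μ f Z a = nuf μ f Z (Ioo a b) + μ.toFun ((f : X → ℝ) ⁻¹' Ici b) := by
  have hd : Disjoint ((f : X → ℝ) ⁻¹' (Ioo a b \ Z)) ((f : X → ℝ) ⁻¹' (Ici b)) :=
    Disjoint.preimage _ ((Set.Iio_disjoint_Ici (le_refl b)).mono_left
      (fun x hx => hx.1.2))
  have h1 := μ.tm1 _ _ hd (Or.inl (nuf_isOpen f hZ isOpen_Ioo)) (Or.inr (hKp b hb))
    (Or.inl (by rw [← preimage_union, id1 hZ hb hab]; exact nuf_isOpen f hZ isOpen_Ioi))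
  rw [← preimage_union, id1 hZ hb hab] at h1
  exact h1

lemma split_Iio_pos (hZ : Z ⊆ {0})
    (hKp : ∀ t : ℝ, 0 < t → IsCompact ((f : X → ℝ) ⁻¹' Ici t))
    {b : ℝ} (hb : 0 < b) :
    nuf μ f Z univ = nuf μ f Z (Iio b) + μ.toFun ((f : X → ℝ) ⁻¹' Ici b) := by
  have hd : Disjoint ((f : X → ℝ) ⁻¹' (Iio b \ Z)) ((f : X → ℝ) ⁻¹' (Ici b)) :=
    Disjoint.preimage _ ((Set.Iio_disjoint_Ici (le_refl b)).mono_left (fun x hx => hx.1))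
  have h1 := μ.tm1 _ _ hd (Or.inl (nuf_isOpen f hZ isOpen_Iio)) (Or.inr (hKp b hb))
    (Or.inl (by rw [← preimage_union, id2 hZ hb]; exact nuf_isOpen f hZ isOpen_univ))
  rw [← preimage_union, id2 hZ hb] at h1
  exact h1

lemma split_neg (hZ : Z ⊆ {0})
    (hKn : ∀ t : ℝ, t < 0 → IsCompact ((f : X → ℝ) ⁻¹' Iic t))
    {t : ℝ} (ht : t < 0) :
    nuf μ f Z univ = FDf μ f Z t + μ.toFun ((f : X → ℝ) ⁻¹' Iic t) := by
  have hd : Disjoint ((f : X → ℝ) ⁻¹' (Ioi t \ Z)) ((f : X → ℝ) ⁻¹' (Iic t)) :=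
    Disjoint.preimage _ ((Set.Iic_disjoint_Ioi (le_refl t)).symm.mono_left (fun x hx => hx.1))
  have h1 := μ.tm1 _ _ hd (Or.inl (nuf_isOpen f hZ isOpen_Ioi)) (Or.inr (hKn t ht))
    (Or.inl (by rw [← preimage_union, id3 hZ ht]; exact nuf_isOpen f hZ isOpen_univ))
  rw [← preimage_union, id3 hZ ht] at h1
  exact h1

lemma split_Ooo_neg (hZ : Z ⊆ {0})
    (hKn : ∀ t : ℝ, t < 0 → IsCompact ((f : X → ℝ) ⁻¹' Iic t))
    {a b : ℝ} (ha : a < 0) (hab : a < b) :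
    nuf μ f Z (Iio b) = nuf μ f Z (Ioo a b) + μ.toFun ((f : X → ℝ) ⁻¹' Iic a) := by
  have hd : Disjoint ((f : X → ℝ) ⁻¹' (Ioo a b \ Z)) ((f : X → ℝ) ⁻¹' (Iic a)) :=
    Disjoint.preimage _ ((Set.Iic_disjoint_Ioi (le_refl a)).symm.mono_left
      (fun x hx => hx.1.1))
  have h1 := μ.tm1 _ _ hd (Or.inl (nuf_isOpen f hZ isOpen_Ioo)) (Or.inr (hKn a ha))
    (Or.inl (by rw [← preimage_union, id4 hZ ha hab]; exact nuf_isOpen f hZ isOpen_Iio))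
  rw [← preimage_union, id4 hZ ha hab] at h1
  exact h1

lemma Lpos (hZ : Z ⊆ {0})
    (hKp : ∀ t : ℝ, 0 < t → IsCompact ((f : X → ℝ) ⁻¹' Ici t))
    {b : ℝ} (hb : 0 < b) :
    Lf μ f Z b = μ.toFun ((f : X → ℝ) ⁻¹' Ici b) := by
  refine le_antisymm ?_ (le_iInf₂ fun s hs => μ.mono_co (hKp b hb)
    (nuf_isOpen f hZ isOpen_Ioi) (Ici_preimage_subset f hZ hb hs))
  rw [μ.tm3 _ ((isClosed_Ici).preimage f.continuous)]
  refine le_iInf₂ fun U hU => ?_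
  set t : ℕ → ℝ := fun n => b - b / (n + 2) with ht
  have hpos : ∀ n, 0 < t n := by
    intro n
    have h2 : (1 : ℝ) < (n : ℝ) + 2 := by
      have : (0:ℝ) ≤ (n:ℝ) := Nat.cast_nonneg n
      linarith
    have := div_lt_self hb h2
    simp only [ht, sub_pos]
    exact this
  have hlt : ∀ n, t n < b := by
    intro n
    have h2 : (0 : ℝ) < (n : ℝ) + 2 := by
      have : (0:ℝ) ≤ (n:ℝ) := Nat.cast_nonneg n
      linarith
    simp only [ht, sub_lt_self_iff]
    exact div_pos hb h2
  have hmono : Monotone t := by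
    intro n m hnm
    have h2 : (0 : ℝ) < (n : ℝ) + 2 := by
      have : (0:ℝ) ≤ (n:ℝ) := Nat.cast_nonneg n
      linarith
    have h3 : ((n : ℝ) + 2) ≤ ((m : ℝ) + 2) := by
      have : (n:ℝ) ≤ (m:ℝ) := Nat.cast_le.mpr hnm
      linarith
    simp only [ht]
    have := div_le_div_of_nonneg_left hb.le h2 h3
    linarith
  have htend : Tendsto t atTop (𝓝 b) := by
    have hden : Tendsto (fun n : ℕ => ((n : ℝ) + 2)) atTop atTop :=
      tendsto_atTop_add_const_right _ 2 tendsto_natCast_atTop_atTop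
    have hdiv : Tendsto (fun n : ℕ => b / ((n : ℝ) + 2)) atTop (𝓝 0) :=
      Tendsto.div_atTop tendsto_const_nhds hden
    have := Tendsto.const_sub b hdiv
    simpa using this
  have hZc : ∀ n, IsClosed (((f : X → ℝ) ⁻¹' Ici (t n)) ∩ Uᶜ) := fun n =>
    (isClosed_Ici.preimage f.continuous).inter (hU.1.isClosed_compl)
  have hempty : (((f : X → ℝ) ⁻¹' Ici (t 0)) ∩ ⋂ n, (((f : X → ℝ) ⁻¹' Ici (t n)) ∩ Uᶜ)) = ∅ := by
    ext x
    simp only [mem_inter_iff, mem_iInter, mem_empty_iff_false, iff_false, not_and]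
    intro _ hx
    have hbx : b ≤ (f : X → ℝ) x :=
      le_of_tendsto htend (Eventually.of_forall fun n => show t n ≤ (f : X → ℝ) x from (hx n).1)
    exact absurd (hU.2 hbx) (hx 0).2
  obtain ⟨I, hI⟩ := (hKp (t 0) (hpos 0)).elim_finite_subfamily_closed _ hZc hempty
  set N := I.sup id with hN
  have hsubU : ((f : X → ℝ) ⁻¹' Ici (t N)) ⊆ U := by
    intro x hx
    by_contra hxU
    have hxI : x ∈ ((f : X → ℝ) ⁻¹' Ici (t 0)) ∩ ⋂ n ∈ I, (((f : X → ℝ) ⁻¹' Ici (t n)) ∩ Uᶜ) := by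
      refine ⟨le_trans (hmono (Nat.zero_le N)) hx, ?_⟩
      simp only [mem_iInter]
      intro n hn
      exact ⟨le_trans (hmono (Finset.le_sup (f := id) hn)) hx, hxU⟩
    exact absurd (hI ▸ hxI) (notMem_empty x)
  calc Lf μ f Z b ≤ FDf μ f Z (t N) := Lf_le μ f (hlt N)
    _ ≤ μ.toFun U := μ.mono_oo (nuf_isOpen f hZ isOpen_Ioi) hU.1
        (fun x hx => hsubU (show t N ≤ (f : X → ℝ) x from le_of_lt (show t N < (f : X → ℝ) x from hx.1)))

lemma Iio_diff_Z (hZ : Z ⊆ {0}) {b : ℝ} (hb : b ≤ 0) : Iio b \ Z = Iio b := by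
  ext x
  simp only [mem_diff, mem_Iio, and_iff_left_iff_imp]
  intro hx hxZ
  have := hZ hxZ; simp only [mem_singleton_iff] at this; subst this
  exact absurd (lt_of_lt_of_le hx hb) (lt_irrefl 0)

lemma Hneg (hZ : Z ⊆ {0}) {b : ℝ} (hb : b ≤ 0) :
    (⨆ t ∈ Iio b, μ.toFun ((f : X → ℝ) ⁻¹' Iic t)) = nuf μ f Z (Iio b) := by
  have hIo : IsOpen ((f : X → ℝ) ⁻¹' (Iio b \ Z)) := nuf_isOpen f hZ isOpen_Iio
  refine le_antisymm (iSup₂_le fun s hs => μ.mono_cl (isClosed_Iic.preimage f.continuous)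
    hIo (fun x hx => by
      rw [Iio_diff_Z hZ hb]
      have hxs : (f : X → ℝ) x ≤ s := hx
      exact lt_of_le_of_lt hxs hs)) ?_
  rw [nuf, μ.tm2 _ hIo]
  refine iSup₂_le fun K hK => ?_
  rcases K.eq_empty_or_nonempty with rfl | hne
  · rw [μ.empty_eq]; exact zero_le
  · obtain ⟨s1, hs1⟩ := (hK.1.image f.continuous).exists_isGreatest (hne.image _)
    have hs1m : s1 ∈ Iio b \ Z := (image_subset_iff.mpr hK.2) hs1.1
    have hs1b : s1 < b := hs1m.1
    have hmid1 : s1 < (s1 + b) / 2 := by linarith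
    have hmid2 : (s1 + b) / 2 < b := by linarith
    have hKsub : K ⊆ (f : X → ℝ) ⁻¹' (Iic ((s1 + b) / 2)) := by
      intro x hx
      exact le_of_lt (lt_of_le_of_lt (hs1.2 (mem_image_of_mem _ hx)) hmid1)
    calc μ.toFun K ≤ μ.toFun ((f : X → ℝ) ⁻¹' Iic ((s1 + b) / 2)) :=
          μ.mono_cc hK.1 (isClosed_Iic.preimage f.continuous) hKsub
      _ ≤ ⨆ t ∈ Iio b, μ.toFun ((f : X → ℝ) ⁻¹' Iic t) :=
          le_biSup (fun t => μ.toFun ((f : X → ℝ) ⁻¹' Iic t)) hmid2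

lemma Lneg (hZ : Z ⊆ {0})
    (hKn : ∀ t : ℝ, t < 0 → IsCompact ((f : X → ℝ) ⁻¹' Iic t))
    (hfin : nuf μ f Z univ ≠ ∞) {b : ℝ} (hb : b ≤ 0) :
    Lf μ f Z b = nuf μ f Z univ - nuf μ f Z (Iio b) := by
  have hne : Nonempty (↥(Iio b)) := ⟨⟨b - 1, sub_one_lt b⟩⟩
  have hcongr : ∀ t : ↥(Iio b), FDf μ f Z t.1 =
      nuf μ f Z univ - μ.toFun ((f : X → ℝ) ⁻¹' Iic t.1) := by
    rintro ⟨t, htb⟩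
    have ht0 : t < 0 := lt_of_lt_of_le htb hb
    have hsp := split_neg μ f hZ hKn ht0
    have hIicfin : μ.toFun ((f : X → ℝ) ⁻¹' Iic t) ≠ ∞ := by
      intro htop
      rw [htop] at hsp
      exact hfin (by simp [hsp])
    exact ENNReal.eq_sub_of_add_eq hIicfin hsp.symm
  rw [Lf, iInf_subtype']
  calc (⨅ t : ↥(Iio b), FDf μ f Z t.1)
      = ⨅ t : ↥(Iio b), (nuf μ f Z univ - μ.toFun ((f : X → ℝ) ⁻¹' Iic t.1)) :=
        iInf_congr hcongr
    _ = nuf μ f Z univ - ⨆ t : ↥(Iio b), μ.toFun ((f : X → ℝ) ⁻¹' Iic t.1) :=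
        (ENNReal.sub_iSup hfin).symm
    _ = nuf μ f Z univ - nuf μ f Z (Iio b) := by
        rw [← Hneg μ f hZ hb, iSup_subtype']

lemma key_Ioo (hZ : Z ⊆ {0})
    (hKp : ∀ t : ℝ, 0 < t → IsCompact ((f : X → ℝ) ⁻¹' Ici t))
    (hKn : ∀ t : ℝ, t < 0 → IsCompact ((f : X → ℝ) ⁻¹' Iic t))
    (hfin : nuf μ f Z univ ≠ ∞) {a b : ℝ} (hab : a < b) :
    FDf μ f Z a = nuf μ f Z (Ioo a b) + Lf μ f Z b := by
  rcases lt_or_ge 0 b with hb | hb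
  · rw [Lpos μ f hZ hKp hb]
    exact split_pos μ f hZ hKp hb hab
  · have ha : a < 0 := lt_of_lt_of_le hab hb
    rw [Lneg μ f hZ hKn hfin hb]
    have h1 := split_Ooo_neg μ f hZ hKn ha hab
    have h2 := split_neg μ f hZ hKn ha
    have hIiob_le : nuf μ f Z (Iio b) ≤ nuf μ f Z univ :=
      nuf_le_univ μ f hZ isOpen_Iio
    have hIiob_fin : nuf μ f Z (Iio b) ≠ ∞ := fun h => hfin (top_le_iff.mp (h ▸ hIiob_le))
    have hOoo_le : nuf μ f Z (Ioo a b) ≤ FDf μ f Z a :=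
      nuf_mono μ f hZ isOpen_Ioo isOpen_Ioi Ioo_subset_Ioi_self
    have h3 : nuf μ f Z univ - nuf μ f Z (Iio b) = FDf μ f Z a - nuf μ f Z (Ioo a b) := by
      apply ENNReal.sub_eq_of_eq_add hIiob_fin
      rw [h1]
      calc nuf μ f Z univ = FDf μ f Z a + μ.toFun ((f : X → ℝ) ⁻¹' Iic a) := h2
        _ = (FDf μ f Z a - nuf μ f Z (Ioo a b)) +
            (nuf μ f Z (Ioo a b) + μ.toFun ((f : X → ℝ) ⁻¹' Iic a)) := by
            rw [← add_assoc, tsub_add_cancel_of_le hOoo_le]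
    rw [h3]
    exact (add_tsub_cancel_of_le hOoo_le).symm

lemma key_Iio (hZ : Z ⊆ {0})
    (hKp : ∀ t : ℝ, 0 < t → IsCompact ((f : X → ℝ) ⁻¹' Ici t))
    (hKn : ∀ t : ℝ, t < 0 → IsCompact ((f : X → ℝ) ⁻¹' Iic t))
    (hfin : nuf μ f Z univ ≠ ∞) (b : ℝ) :
    nuf μ f Z univ = nuf μ f Z (Iio b) + Lf μ f Z b := by
  rcases lt_or_ge 0 b with hb | hb
  · rw [Lpos μ f hZ hKp hb]
    exact split_Iio_pos μ f hZ hKp hb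
  · rw [Lneg μ f hZ hKn hfin hb]
    exact (add_tsub_cancel_of_le (nuf_le_univ μ f hZ isOpen_Iio)).symm

lemma FDf_fin (hZ : Z ⊆ {0}) (hfin : nuf μ f Z univ ≠ ∞) (a : ℝ) : FDf μ f Z a ≠ ∞ :=
  fun h => hfin (top_le_iff.mp (h ▸ FDf_le_univ μ f hZ a))

lemma Lf_fin (hZ : Z ⊆ {0}) (hfin : nuf μ f Z univ ≠ ∞) (b : ℝ) : Lf μ f Z b ≠ ∞ :=
  fun h => hfin (top_le_iff.mp (h ▸ Lf_le_univ μ f hZ b))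

/-- The distribution function as a Stieltjes function. -/
noncomputable def SFf (μ : TopMeasure X) (f : X →ᵇ ℝ) (Z : Set ℝ) (hZ : Z ⊆ {0})
    (hfin : nuf μ f Z univ ≠ ∞) : StieltjesFunction ℝ where
  toFun := fun a => (nuf μ f Z univ).toReal - (FDf μ f Z a).toReal
  mono' := fun a b hab => by
    have h := (ENNReal.toReal_le_toReal (FDf_fin μ f hZ hfin b)
      (FDf_fin μ f hZ hfin a)).mpr (FDf_anti μ f hZ hab)
    exact sub_le_sub_left h _
  right_continuous' := fun x => by
    rw [← Set.Ioi_insert, continuousWithinAt_insert_self]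
    have h1 : Tendsto (FDf μ f Z) (𝓝[>] x) (𝓝 (FDf μ f Z x)) := by
      have h := (FDf_anti μ f hZ).tendsto_nhdsGT x
      rwa [sSup_image, ← FDf_rc μ f hZ x] at h
    have h2 : Tendsto (fun t => (FDf μ f Z t).toReal) (𝓝[>] x)
        (𝓝 (FDf μ f Z x).toReal) :=
      (ENNReal.tendsto_toReal (FDf_fin μ f hZ hfin x)).comp h1
    exact Tendsto.const_sub _ h2

variable {hZ : Z ⊆ {0}} {hfin : nuf μ f Z univ ≠ ∞}

lemma SFf_apply (a : ℝ) :
    SFf μ f Z hZ hfin a = (nuf μ f Z univ).toReal - (FDf μ f Z a).toReal := rfl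

lemma FDf_large {a : ℝ} (ha : ‖f‖ ≤ a) : FDf μ f Z a = 0 := by
  have : (f : X → ℝ) ⁻¹' (Ioi a \ Z) = ∅ := by
    ext x
    simp only [mem_preimage, mem_diff, mem_Ioi, mem_empty_iff_false, iff_false, not_and]
    intro hx
    have h1 : (f : X → ℝ) x ≤ ‖f‖ := le_trans (le_abs_self _)
      (by rw [← Real.norm_eq_abs]; exact f.norm_coe_le_norm x)
    exact absurd hx (not_lt.mpr (le_trans h1 ha))
  rw [FDf, nuf, this, μ.empty_eq]

lemma FDf_small {a : ℝ} (ha : a < -‖f‖) : FDf μ f Z a = nuf μ f Z univ := by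
  have : (f : X → ℝ) ⁻¹' (Ioi a \ Z) = (f : X → ℝ) ⁻¹' (univ \ Z) := by
    ext x
    simp only [mem_preimage, mem_diff, mem_Ioi, mem_univ, true_and]
    constructor
    · exact fun h => h.2
    · intro h
      refine ⟨lt_of_lt_of_le ha ?_, h⟩
      have h1 : -‖f‖ ≤ (f : X → ℝ) x := by
        have := f.norm_coe_le_norm x
        rw [Real.norm_eq_abs] at this
        linarith [neg_abs_le ((f : X → ℝ) x)]
      exact h1
  rw [FDf, nuf, this]
  rfl

lemma SFf_tendsto_atTop :
    Tendsto (SFf μ f Z hZ hfin) atTop (𝓝 (nuf μ f Z univ).toReal) := by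
  apply Tendsto.congr' _ (tendsto_const_nhds (α := ℝ))
  filter_upwards [eventually_ge_atTop ‖f‖] with a ha
  rw [SFf_apply, FDf_large μ f ha]
  simp

lemma SFf_tendsto_atBot : Tendsto (SFf μ f Z hZ hfin) atBot (𝓝 0) := by
  apply Tendsto.congr' _ (tendsto_const_nhds (α := ℝ))
  filter_upwards [eventually_le_atBot (-‖f‖ - 1)] with a ha
  rw [SFf_apply, FDf_small μ f (by linarith [norm_nonneg f] : a < -‖f‖)]
  simp

lemma mf_univ : (SFf μ f Z hZ hfin).measure univ = nuf μ f Z univ := by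
  rw [StieltjesFunction.measure_univ _ (SFf_tendsto_atBot μ f) (SFf_tendsto_atTop μ f),
    sub_zero, ENNReal.ofReal_toReal hfin]

lemma ofReal_SFf (a : ℝ) :
    ENNReal.ofReal (SFf μ f Z hZ hfin a) = nuf μ f Z univ - FDf μ f Z a := by
  rw [SFf_apply, ← ENNReal.toReal_sub_of_le (FDf_le_univ μ f hZ a) hfin,
    ENNReal.ofReal_toReal (ENNReal.sub_ne_top hfin)]

lemma mf_Ioi (a : ℝ) : (SFf μ f Z hZ hfin).measure (Ioi a) = FDf μ f Z a := by
  haveI : IsFiniteMeasure (SFf μ f Z hZ hfin).measure :=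
    (SFf μ f Z hZ hfin).isFiniteMeasure (SFf_tendsto_atBot μ f) (SFf_tendsto_atTop μ f)
  have h1 : (SFf μ f Z hZ hfin).measure (Ioi a)
      = (SFf μ f Z hZ hfin).measure univ - (SFf μ f Z hZ hfin).measure (Iic a) := by
    rw [← Set.compl_Iic]
    exact measure_compl measurableSet_Iic (measure_ne_top _ _)
  rw [h1, mf_univ μ f, StieltjesFunction.measure_Iic _ (SFf_tendsto_atBot μ f), sub_zero,
    ofReal_SFf μ f, ENNReal.sub_sub_cancel hfin (FDf_le_univ μ f hZ a)]

lemma leftLim_SFf (b : ℝ) :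
    Function.leftLim (SFf μ f Z hZ hfin) b = (nuf μ f Z univ).toReal - (Lf μ f Z b).toReal := by
  apply leftLim_eq_of_tendsto
  have h1 : Tendsto (FDf μ f Z) (𝓝[<] b) (𝓝 (Lf μ f Z b)) := by
    have h := (FDf_anti μ f hZ).tendsto_nhdsLT b
    rwa [sInf_image] at h
  have h2 : Tendsto (fun t => (FDf μ f Z t).toReal) (𝓝[<] b)
      (𝓝 (Lf μ f Z b).toReal) :=
    (ENNReal.tendsto_toReal (Lf_fin μ f hZ hfin b)).comp h1
  exact Tendsto.const_sub _ h2

lemma mf_Iio (hKp : ∀ t : ℝ, 0 < t → IsCompact ((f : X → ℝ) ⁻¹' Ici t))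
    (hKn : ∀ t : ℝ, t < 0 → IsCompact ((f : X → ℝ) ⁻¹' Iic t)) (b : ℝ) :
    (SFf μ f Z hZ hfin).measure (Iio b) = nuf μ f Z (Iio b) := by
  haveI : IsFiniteMeasure (SFf μ f Z hZ hfin).measure :=
    (SFf μ f Z hZ hfin).isFiniteMeasure (SFf_tendsto_atBot μ f) (SFf_tendsto_atTop μ f)
  have hIci : (SFf μ f Z hZ hfin).measure (Ici b) = Lf μ f Z b := by
    rw [StieltjesFunction.measure_Ici _ (SFf_tendsto_atTop μ f), leftLim_SFf μ f,
      sub_sub_cancel, ENNReal.ofReal_toReal (Lf_fin μ f hZ hfin b)]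
  have h1 : (SFf μ f Z hZ hfin).measure (Iio b)
      = (SFf μ f Z hZ hfin).measure univ - (SFf μ f Z hZ hfin).measure (Ici b) := by
    rw [← Set.compl_Ici]
    exact measure_compl measurableSet_Ici (measure_ne_top _ _)
  rw [h1, mf_univ μ f, hIci]
  exact ENNReal.sub_eq_of_eq_add (Lf_fin μ f hZ hfin b)
    (key_Iio μ f hZ hKp hKn hfin b)

lemma mf_Ioo (hKp : ∀ t : ℝ, 0 < t → IsCompact ((f : X → ℝ) ⁻¹' Ici t))
    (hKn : ∀ t : ℝ, t < 0 → IsCompact ((f : X → ℝ) ⁻¹' Iic t)) {a b : ℝ} (hab : a < b) :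
    (SFf μ f Z hZ hfin).measure (Ioo a b) = nuf μ f Z (Ioo a b) := by
  have h1 : Function.leftLim (SFf μ f Z hZ hfin) b - SFf μ f Z hZ hfin a
      = (FDf μ f Z a).toReal - (Lf μ f Z b).toReal := by
    rw [leftLim_SFf μ f, SFf_apply]
    ring
  rw [StieltjesFunction.measure_Ioo, h1,
    ← ENNReal.toReal_sub_of_le (Lf_le μ f hab) (FDf_fin μ f hZ hfin a),
    ENNReal.ofReal_toReal (ENNReal.sub_ne_top (FDf_fin μ f hZ hfin a))]
  exact ENNReal.sub_eq_of_eq_add (Lf_fin μ f hZ hfin b) (key_Ioo μ f hZ hKp hKn hfin hab)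

lemma no_least {s : Set ℝ} (hs : IsOpen s) (hb : BddBelow s) (hx : sInf s ∈ s) : False := by
  obtain ⟨ε, hε, hball⟩ := Metric.isOpen_iff.mp hs _ hx
  have hmem : sInf s - ε / 2 ∈ s := by
    apply hball
    rw [Metric.mem_ball, Real.dist_eq]
    rw [show sInf s - ε / 2 - sInf s = -(ε / 2) by ring, abs_neg, abs_of_pos (by linarith)]
    linarith
  have := csInf_le hb hmem
  linarith

lemma no_greatest {s : Set ℝ} (hs : IsOpen s) (hb : BddAbove s) (hx : sSup s ∈ s) : False := by
  obtain ⟨ε, hε, hball⟩ := Metric.isOpen_iff.mp hs _ hx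
  have hmem : sSup s + ε / 2 ∈ s := by
    apply hball
    rw [Metric.mem_ball, Real.dist_eq]
    rw [show sSup s + ε / 2 - sSup s = ε / 2 by ring, abs_of_pos (by linarith)]
    linarith
  have := le_csSup hb hmem
  linarith

lemma mf_preconn (hKp : ∀ t : ℝ, 0 < t → IsCompact ((f : X → ℝ) ⁻¹' Ici t))
    (hKn : ∀ t : ℝ, t < 0 → IsCompact ((f : X → ℝ) ⁻¹' Iic t))
    {C : Set ℝ} (hC : IsOpen C) (hconn : IsPreconnected C) :
    (SFf μ f Z hZ hfin).measure C = nuf μ f Z C := by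
  rcases eq_empty_or_nonempty C with rfl | hne
  · rw [measure_empty, nuf_empty]
  rcases hconn.mem_intervals with h|h|h|h|h|h|h|h|h|h
  · exfalso
    obtain ⟨a, b, h⟩ : ∃ a b, C = Icc a b := ⟨_, _, h⟩
    refine no_least hC (by rw [h]; exact bddBelow_Icc) ?_
    have hab : a ≤ b := nonempty_Icc.mp (h ▸ hne)
    have : sInf C = a := by rw [h]; exact csInf_Icc hab
    rw [this, h]
    exact left_mem_Icc.mpr hab
  · exfalso
    obtain ⟨a, b, h⟩ : ∃ a b, C = Ico a b := ⟨_, _, h⟩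
    refine no_least hC (by rw [h]; exact bddBelow_Ico) ?_
    have hab : a < b := nonempty_Ico.mp (h ▸ hne)
    have : sInf C = a := by rw [h]; exact csInf_Ico hab
    rw [this, h]
    exact left_mem_Ico.mpr hab
  · exfalso
    obtain ⟨a, b, h⟩ : ∃ a b, C = Ioc a b := ⟨_, _, h⟩
    refine no_greatest hC (by rw [h]; exact bddAbove_Ioc) ?_
    have hab : a < b := nonempty_Ioc.mp (h ▸ hne)
    have : sSup C = b := by rw [h]; exact csSup_Ioc hab
    rw [this, h]
    exact right_mem_Ioc.mpr hab
  · obtain ⟨a, b, h⟩ : ∃ a b, C = Ioo a b := ⟨_, _, h⟩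
    rw [h] at hne ⊢
    exact mf_Ioo μ f hKp hKn (nonempty_Ioo.mp hne)
  · exfalso
    obtain ⟨a, h⟩ : ∃ a, C = Ici a := ⟨_, h⟩
    refine no_least hC (by rw [h]; exact bddBelow_Ici) ?_
    have : sInf C = a := by rw [h]; exact csInf_Ici
    rw [this, h]
    exact self_mem_Ici
  · obtain ⟨a, h⟩ : ∃ a, C = Ioi a := ⟨_, h⟩
    rw [h]
    exact mf_Ioi μ f _
  · exfalso
    obtain ⟨b, h⟩ : ∃ b, C = Iic b := ⟨_, h⟩
    refine no_greatest hC (by rw [h]; exact bddAbove_Iic) ?_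
    have : sSup C = b := by rw [h]; exact csSup_Iic
    rw [this, h]
    exact self_mem_Iic
  · obtain ⟨b, h⟩ : ∃ b, C = Iio b := ⟨_, h⟩
    rw [h]
    exact mf_Iio μ f hKp hKn _
  · rw [h]
    exact mf_univ μ f
  · exact absurd (h ▸ hne) (by simp)

lemma components_exist {W : Set ℝ} (hW : IsOpen W) {K : Set ℝ} (hK : IsCompact K)
    (hKW : K ⊆ W) :
    ∃ T : Finset (Set ℝ), (∀ C ∈ T, IsOpen C ∧ IsPreconnected C ∧ C ⊆ W) ∧
      Set.PairwiseDisjoint (↑T : Set (Set ℝ)) id ∧ K ⊆ ⋃ C ∈ T, C := by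
  classical
  obtain ⟨s, hs⟩ := hK.elim_finite_subcover (fun x : ↥K => connectedComponentIn W x.1)
    (fun x => hW.connectedComponentIn)
    (fun x hx => mem_iUnion.mpr ⟨⟨x, hx⟩, mem_connectedComponentIn (hKW hx)⟩)
  refine ⟨s.image (fun x => connectedComponentIn W x.1), ?_, ?_, ?_⟩
  · intro C hC
    obtain ⟨x, -, rfl⟩ := Finset.mem_image.mp hC
    exact ⟨hW.connectedComponentIn, isPreconnected_connectedComponentIn,
      connectedComponentIn_subset _ _⟩
  · intro C hC D hD hCD
    obtain ⟨x, -, rfl⟩ := Finset.mem_image.mp (Finset.mem_coe.mp hC)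
    obtain ⟨y, -, rfl⟩ := Finset.mem_image.mp (Finset.mem_coe.mp hD)
    by_contra hnd
    obtain ⟨z, hz1, hz2⟩ := Set.not_disjoint_iff.mp hnd
    exact hCD ((connectedComponentIn_eq hz1).trans (connectedComponentIn_eq hz2).symm)
  · intro x hx
    have := hs hx
    simp only [mem_iUnion] at this
    obtain ⟨i, hi, hmem⟩ := this
    exact mem_biUnion (Finset.mem_image_of_mem _ hi) hmem

lemma mf_open (hKp : ∀ t : ℝ, 0 < t → IsCompact ((f : X → ℝ) ⁻¹' Ici t))
    (hKn : ∀ t : ℝ, t < 0 → IsCompact ((f : X → ℝ) ⁻¹' Iic t))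
    {W : Set ℝ} (hW : IsOpen W) :
    (SFf μ f Z hZ hfin).measure W = nuf μ f Z W := by
  set m := (SFf μ f Z hZ hfin).measure with hm
  have hTsum : ∀ T : Finset (Set ℝ), (∀ C ∈ T, IsOpen C ∧ IsPreconnected C ∧ C ⊆ W) →
      Set.PairwiseDisjoint (↑T : Set (Set ℝ)) id → m (⋃ C ∈ T, C) = nuf μ f Z (⋃ C ∈ T, C) := by
    intro T hT1 hT2
    calc m (⋃ C ∈ T, C) = ∑ C ∈ T, m C :=
          measure_biUnion_finset hT2 (fun C hC => ((hT1 C hC).1).measurableSet)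
      _ = ∑ C ∈ T, nuf μ f Z C := Finset.sum_congr rfl
          (fun C hC => mf_preconn μ f hKp hKn (hT1 C hC).1 (hT1 C hC).2.1)
      _ = nuf μ f Z (⋃ C ∈ T, C) :=
          (nuf_finset_add μ f hZ T (fun C hC => (hT1 C hC).1) hT2).symm
  apply le_antisymm
  · rw [hW.measure_eq_iSup_isCompact]
    refine iSup₂_le fun K hKW => iSup_le fun hK => ?_
    obtain ⟨T, hT1, hT2, hT3⟩ := components_exist hW hK hKW
    calc m K ≤ m (⋃ C ∈ T, C) := measure_mono hT3
      _ = nuf μ f Z (⋃ C ∈ T, C) := hTsum T hT1 hT2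
      _ ≤ nuf μ f Z W := nuf_mono μ f hZ (isOpen_biUnion fun C hC => (hT1 C hC).1) hW
          (iUnion₂_subset fun C hC => (hT1 C hC).2.2)
  · rw [nuf, μ.tm2 _ (nuf_isOpen f hZ hW)]
    refine iSup₂_le fun D hD => ?_
    have hfD : IsCompact ((f : X → ℝ) '' D) := hD.1.image f.continuous
    have hfDW : (f : X → ℝ) '' D ⊆ W := (image_subset_iff.mpr hD.2).trans diff_subset
    obtain ⟨T, hT1, hT2, hT3⟩ := components_exist hW hfD hfDW
    have hDsub : D ⊆ (f : X → ℝ) ⁻¹' ((⋃ C ∈ T, C) \ Z) := fun x hx =>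
      ⟨hT3 (mem_image_of_mem _ hx), (hD.2 hx).2⟩
    calc μ.toFun D ≤ nuf μ f Z (⋃ C ∈ T, C) := μ.mono_co hD.1
          (nuf_isOpen f hZ (isOpen_biUnion fun C hC => (hT1 C hC).1)) hDsub
      _ = m (⋃ C ∈ T, C) := (hTsum T hT1 hT2).symm
      _ ≤ m W := measure_mono (iUnion₂_subset fun C hC => (hT1 C hC).2.2)

end Master

/-- Master existence theorem. -/
theorem master_exists {X : Type u} [TopologicalSpace X] [T2Space X]
    (μ : TopMeasure X) (f : X →ᵇ ℝ) (Z : Set ℝ) (hZ : Z ⊆ {0})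
    (hKp : ∀ t : ℝ, 0 < t → IsCompact ((f : X → ℝ) ⁻¹' Ici t))
    (hKn : ∀ t : ℝ, t < 0 → IsCompact ((f : X → ℝ) ⁻¹' Iic t))
    (hfin : μ.toFun ((f : X → ℝ) ⁻¹' Zᶜ) ≠ ∞) :
    ∃ m : Measure ℝ, IsFiniteMeasure m ∧
      ∀ W : Set ℝ, IsOpen W → m W = μ.toFun ((f : X → ℝ) ⁻¹' (W \ Z)) := by
  have hfin' : nuf μ f Z univ ≠ ∞ := by rwa [nuf_univ_eq]
  refine ⟨(SFf μ f Z hZ hfin').measure,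
    (SFf μ f Z hZ hfin').isFiniteMeasure (SFf_tendsto_atBot μ f) (SFf_tendsto_atTop μ f),
    fun W hW => mf_open μ f hKp hKn hW⟩

/-- existence of the measure `m_f` on `ℝ`. (A) If `μ(X) < ∞` and `f ∈ C₀(X)`
there is a finite Borel measure `m` with `m(W) = μ(f⁻¹(W))` for all open `W ⊆ ℝ`;
(B) if `μ` is compact-finite and `f ∈ C_c(X)` there is a compact-finite Borel measure `m`
with `m(W) = μ(f⁻¹(W \ {0}))` for all open `W ⊆ ℝ`, hence `m(W) = μ(f⁻¹(W))` for open
`W ⊆ ℝ \ {0}`. In either case `m` is the Stieltjes measure of the distribution function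
(`m((a,∞)) = F(a)` for all `a`) and its support lies in the closure of `f(X)`. -/
theorem exists_mf {X : Type u} [TopologicalSpace X]
    [LocallyCompactSpace X] [T2Space X] [ConnectedSpace X] (μ : TopMeasure X) :
    (∀ f : X →ᵇ ℝ, μ.toFun Set.univ ≠ ∞ → f ∈ C0S X →
      ∃ m : Measure ℝ, IsFiniteMeasure m ∧ IsMfA μ f m ∧
        (∀ a : ℝ, m (Set.Ioi a) = μ.toFun ((f : X → ℝ) ⁻¹' Set.Ioi a)) ∧
        m (closure (Set.range (f : X → ℝ)))ᶜ = 0) ∧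
    (∀ f : X →ᵇ ℝ, μ.CompactFinite → f ∈ CcS X →
      ∃ m : Measure ℝ, (∀ K : Set ℝ, IsCompact K → m K ≠ ∞) ∧ IsMfB μ f m ∧
        (∀ W : Set ℝ, IsOpen W → W ⊆ {(0 : ℝ)}ᶜ → m W = μ.toFun ((f : X → ℝ) ⁻¹' W)) ∧
        (∀ a : ℝ, m (Set.Ioi a) = μ.toFun ((f : X → ℝ) ⁻¹' (Set.Ioi a \ {0}))) ∧
        m (closure (Set.range (f : X → ℝ)))ᶜ = 0) := by
  constructor
  · -- Case (A)
    intro f hμfin hf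
    have hcc : ∀ t : ℝ, 0 < t → IsCompact ((f : X → ℝ) ⁻¹' Set.Ici t) ∧
        IsCompact ((f : X → ℝ) ⁻¹' Set.Iic (-t)) := by
      intro t ht
      have hmem : Set.Ioo (-t) t ∈ nhds (0 : ℝ) :=
        isOpen_Ioo.mem_nhds ⟨neg_lt_zero.mpr ht, ht⟩
      have hpre : (f : X → ℝ) ⁻¹' Set.Ioo (-t) t ∈ cocompact X := hf hmem
      obtain ⟨K, hKc, hKsub⟩ := mem_cocompact.mp hpre
      constructor
      · refine hKc.of_isClosed_subset (isClosed_Ici.preimage f.continuous) ?_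
        intro x hx
        by_contra hxK
        exact absurd ((hKsub hxK).2 : (f : X → ℝ) x < t) (not_lt.mpr hx)
      · refine hKc.of_isClosed_subset (isClosed_Iic.preimage f.continuous) ?_
        intro x hx
        by_contra hxK
        exact absurd ((hKsub hxK).1 : -t < (f : X → ℝ) x) (not_lt.mpr hx)
    have hKp : ∀ t : ℝ, 0 < t → IsCompact ((f : X → ℝ) ⁻¹' Set.Ici t) :=
      fun t ht => (hcc t ht).1
    have hKn : ∀ t : ℝ, t < 0 → IsCompact ((f : X → ℝ) ⁻¹' Set.Iic t) := by
      intro t ht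
      have := (hcc (-t) (by linarith)).2
      rwa [neg_neg] at this
    have hfin : μ.toFun ((f : X → ℝ) ⁻¹' (∅ : Set ℝ)ᶜ) ≠ ∞ := by
      rwa [Set.compl_empty, Set.preimage_univ]
    obtain ⟨m, hmfin, hmW⟩ := master_exists μ f ∅ (Set.empty_subset _) hKp hKn hfin
    have hmW' : ∀ W : Set ℝ, IsOpen W → m W = μ.toFun ((f : X → ℝ) ⁻¹' W) := by
      intro W hW
      rw [hmW W hW, Set.diff_empty]
    refine ⟨m, hmfin, hmW', fun a => hmW' _ isOpen_Ioi, ?_⟩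
    rw [hmW' _ isClosed_closure.isOpen_compl]
    have hemp : (f : X → ℝ) ⁻¹' (closure (Set.range (f : X → ℝ)))ᶜ = ∅ := by
      ext x
      simp only [Set.mem_preimage, Set.mem_compl_iff, Set.mem_empty_iff_false, iff_false,
        not_not]
      exact subset_closure (Set.mem_range_self x)
    rw [hemp, μ.empty_eq]
  · -- Case (B)
    intro f hcf hf
    have hf' : IsCompact (tsupport (f : X → ℝ)) := hf
    have hKp : ∀ t : ℝ, 0 < t → IsCompact ((f : X → ℝ) ⁻¹' Set.Ici t) := by
      intro t ht
      refine hf'.of_isClosed_subset (isClosed_Ici.preimage f.continuous) ?_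
      intro x hx
      exact subset_tsupport _ (show (f : X → ℝ) x ≠ 0 from (lt_of_lt_of_le ht hx).ne')
    have hKn : ∀ t : ℝ, t < 0 → IsCompact ((f : X → ℝ) ⁻¹' Set.Iic t) := by
      intro t ht
      refine hf'.of_isClosed_subset (isClosed_Iic.preimage f.continuous) ?_
      intro x hx
      exact subset_tsupport _ (show (f : X → ℝ) x ≠ 0 from (lt_of_le_of_lt hx ht).ne)
    have hfin : μ.toFun ((f : X → ℝ) ⁻¹' ({(0 : ℝ)}ᶜ : Set ℝ)) ≠ ∞ := by
      have h1 : (f : X → ℝ) ⁻¹' ({(0 : ℝ)}ᶜ : Set ℝ) ⊆ tsupport (f : X → ℝ) := by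
        intro x hx
        exact subset_tsupport _ (show (f : X → ℝ) x ≠ 0 from hx)
      have hop : IsOpen ((f : X → ℝ) ⁻¹' ({(0 : ℝ)}ᶜ : Set ℝ)) :=
        isOpen_compl_singleton.preimage f.continuous
      have hle := μ.mono_oc hop (isClosed_tsupport _) h1
      exact fun h => hcf _ hf' (top_le_iff.mp (h ▸ hle))
    obtain ⟨m, hmfin, hmW⟩ := master_exists μ f {0} (subset_refl _) hKp hKn hfin
    haveI := hmfin
    refine ⟨m, fun K _ => measure_ne_top m K, hmW, ?_, fun a => hmW _ isOpen_Ioi, ?_⟩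
    · intro W hW hWs
      rw [hmW W hW, Set.diff_singleton_eq_self (fun h0 => (hWs h0) rfl)]
    · rw [hmW _ isClosed_closure.isOpen_compl]
      have hemp : (f : X → ℝ) ⁻¹' ((closure (Set.range (f : X → ℝ)))ᶜ \ {0}) = ∅ := by
        ext x
        simp only [Set.mem_preimage, Set.mem_diff, Set.mem_compl_iff,
          Set.mem_empty_iff_false, iff_false, not_and]
        intro hc
        exact absurd (subset_closure (Set.mem_range_self x)) hc
      rw [hemp, μ.empty_eq]
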